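/- (Strong structure theorem, partition form.) Let G be a simple graph on a finite vertex set V with a symmetric edge sign function σ with values in {+1, −1}. Then every cycle of G is positive if and only if V can be partitioned into two (possibly empty) sets such that every edge within the same set is positive and every edge between the two sets is negative. -/

import Mathlib

open SimpleGraph

/-- The sign of a walk in a signed graph: the product of the edge signs along it. -/
def walkSign {V : Type*} {G : SimpleGraph V} (σ : V → V → ℤ) {u v : V}
    (w : G.Walk u v) : ℤ :=
  (w.darts.map fun d => σ d.fst d.snd).prod

section Aux

variable {V : Type*} {G : SimpleGraph V} (σ : V → V → ℤ)

lemma walkSign_nil {u : V} : walkSign σ (SimpleGraph.Walk.nil : G.Walk u u) = 1 := rfl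

lemma walkSign_cons {u v w : V} (h : G.Adj u v) (p : G.Walk v w) :
    walkSign σ (SimpleGraph.Walk.cons h p) = σ u v * walkSign σ p := by
  simp [walkSign]

lemma walkSign_append {u v w : V} (p : G.Walk u v) (q : G.Walk v w) :
    walkSign σ (p.append q) = walkSign σ p * walkSign σ q := by
  simp [walkSign, SimpleGraph.Walk.darts_append]

lemma walkSign_pm (hsign : ∀ u v, G.Adj u v → σ u v = 1 ∨ σ u v = -1) :
    ∀ {u v : V} (p : G.Walk u v), walkSign σ p = 1 ∨ walkSign σ p = -1 := by
  intro u v p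
  induction p with
  | nil => left; rfl
  | cons h p ih =>
    rw [walkSign_cons]
    rcases hsign _ _ h with h1 | h1 <;> rcases ih with h2 | h2 <;> simp [h1, h2]

lemma walkSign_reverse (hsymm : ∀ u v, G.Adj u v → σ u v = σ v u)
    {u v : V} (p : G.Walk u v) : walkSign σ p.reverse = walkSign σ p := by
  induction p with
  | nil => rfl
  | cons h p ih =>
    rw [SimpleGraph.Walk.reverse_cons, walkSign_append, walkSign_cons, walkSign_cons,
      walkSign_nil, ih, ← hsymm _ _ h]
    ring

lemma walkSign_rotate [DecidableEq V] {u v : V} (c : G.Walk v v) (h : u ∈ c.support) :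
    walkSign σ (c.rotate u h) = walkSign σ c := by
  unfold walkSign
  exact ((c.rotate_darts u h).map _).perm.prod_eq

/-- A closed walk with the basepoint appearing at least twice in the tail of its support
splits into two strictly shorter closed walks with multiplying signs. -/
lemma walkSign_split [DecidableEq V] {x : V} (w : G.Walk x x)
    (hc : 2 ≤ w.support.tail.count x) :
    ∃ (w1 w2 : G.Walk x x), walkSign σ w = walkSign σ w1 * walkSign σ w2 ∧
      w1.length < w.length ∧ w2.length < w.length := by
  cases w with
  | nil => simp at hc
  | cons h p =>
    rename_i y
    rw [SimpleGraph.Walk.support_cons, List.tail_cons] at hc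
    have hx : x ∈ p.support := List.count_pos_iff.mp (by omega)
    set q := p.takeUntil x hx with hq
    set r := p.dropUntil x hx with hr
    have hspec : q.append r = p := p.take_spec hx
    have hcount : q.support.count x = 1 := p.count_support_takeUntil_eq_one hx
    have hsup : p.support = q.support ++ r.support.tail := by
      rw [← hspec, SimpleGraph.Walk.support_append]
    have hrtail : 1 ≤ r.support.tail.count x := by
      rw [hsup, List.count_append, hcount] at hc
      omega
    have hrlen : 0 < r.length := by
      by_contra hn
      have : r.length = 0 := by omega
      rw [(SimpleGraph.Walk.length_eq_zero_iff.mp this).eq_nil] at hrtail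
      simp at hrtail
    have hlen : p.length = q.length + r.length := by
      rw [← hspec, SimpleGraph.Walk.length_append]
    refine ⟨SimpleGraph.Walk.cons h q, r, ?_, ?_, ?_⟩
    · rw [walkSign_cons, walkSign_cons, ← hspec, walkSign_append]
      ring
    · simp only [SimpleGraph.Walk.length_cons]
      omega
    · simp only [SimpleGraph.Walk.length_cons]
      omega

lemma walkSign_closed (hsymm : ∀ u v, G.Adj u v → σ u v = σ v u)
    (hsign : ∀ u v, G.Adj u v → σ u v = 1 ∨ σ u v = -1)
    (hcyc : ∀ (u : V) (w : G.Walk u u), w.IsCycle → walkSign σ w = 1) :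
    ∀ (n : ℕ) (u : V) (w : G.Walk u u), w.length = n → walkSign σ w = 1 := by
  classical
  intro n
  induction n using Nat.strong_induction_on with
  | _ n ih =>
    intro u w hw
    by_cases hnd : w.support.tail.Nodup
    · -- tail of support is nodup: either nil, a cycle, or a doubled edge
      cases w with
      | nil => rfl
      | cons h p =>
        rename_i v
        rw [SimpleGraph.Walk.support_cons, List.tail_cons] at hnd
        have hpath : p.IsPath := (SimpleGraph.Walk.isPath_def p).mpr hnd
        by_cases he : s(u, v) ∈ p.edges
        · -- the edge is repeated: the walk must be u-v-u
          cases p with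
          | nil => simp at h
          | cons h2 p2 =>
            rename_i y
            rw [SimpleGraph.Walk.edges_cons, List.mem_cons] at he
            have hvp2 : v ∉ p2.support :=
              ((SimpleGraph.Walk.cons_isPath_iff h2 p2).mp hpath).2
            rcases he with he | he
            · have hy : y = u := by
                rcases Sym2.eq_iff.mp he with ⟨h1, h2'⟩ | ⟨h1, h2'⟩
                · exact absurd h1 h.ne
                · exact h1.symm
              subst hy
              have hp2path : p2.IsPath :=
                ((SimpleGraph.Walk.cons_isPath_iff h2 p2).mp hpath).1
              have hp2nil : p2 = SimpleGraph.Walk.nil := by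
                have := SimpleGraph.Path.loop_eq ⟨p2, hp2path⟩
                simpa using congrArg Subtype.val this
              subst hp2nil
              rw [walkSign_cons, walkSign_cons, walkSign_nil, ← hsymm _ _ h]
              rcases hsign _ _ h with h1 | h1 <;> rw [h1] <;> ring
            · exact absurd (SimpleGraph.Walk.snd_mem_support_of_mem_edges p2 he) hvp2
        · exact hcyc u _ ((SimpleGraph.Walk.cons_isCycle_iff p h).mpr ⟨hpath, he⟩)
    · -- there is a repeated vertex: rotate and split
      obtain ⟨x, hx⟩ := List.exists_duplicate_iff_not_nodup.mpr hnd
      have hxc : 2 ≤ w.support.tail.count x := List.duplicate_iff_two_le_count.mp hx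
      have hxs : x ∈ w.support := List.mem_of_mem_tail hx.mem
      have hxc' : 2 ≤ (w.rotate x hxs).support.tail.count x := by
        rw [(SimpleGraph.Walk.support_rotate w x hxs).perm.count_eq]
        exact hxc
      obtain ⟨w1, w2, hsplit, h1, h2⟩ := walkSign_split σ (w.rotate x hxs) hxc'
      have hrlen : (w.rotate x hxs).length = n := by
        have := ((w.rotate_darts x hxs).perm.length_eq)
        rwa [SimpleGraph.Walk.length_darts, SimpleGraph.Walk.length_darts, hw] at this
      rw [← walkSign_rotate σ w hxs, hsplit,
        ih w1.length (by omega) x w1 rfl, ih w2.length (by omega) x w2 rfl]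
      ring

lemma walkSign_unique (hsymm : ∀ u v, G.Adj u v → σ u v = σ v u)
    (hsign : ∀ u v, G.Adj u v → σ u v = 1 ∨ σ u v = -1)
    (hcyc : ∀ (u : V) (w : G.Walk u u), w.IsCycle → walkSign σ w = 1)
    {a b : V} (p q : G.Walk a b) : walkSign σ p = walkSign σ q := by
  have hclosed := walkSign_closed σ hsymm hsign hcyc (p.append q.reverse).length a
    (p.append q.reverse) rfl
  rw [walkSign_append, walkSign_reverse σ hsymm] at hclosed
  rcases walkSign_pm σ hsign q with h1 | h1 <;>
    rcases walkSign_pm σ hsign p with h2 | h2 <;>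
    rw [h1, h2] <;> rw [h1, h2] at hclosed <;> omega

end Aux

/-- Strong structure theorem (partition form): every cycle of a signed graph is positive
iff the vertex set can be partitioned into two (possibly empty) sets such that every edge
within the same set is positive and every edge between the two sets is negative. -/
theorem strong_structure_partition {V : Type*} [Fintype V]
    (G : SimpleGraph V) (σ : V → V → ℤ)
    (hsymm : ∀ u v, G.Adj u v → σ u v = σ v u)
    (hsign : ∀ u v, G.Adj u v → σ u v = 1 ∨ σ u v = -1) :
    (∀ (u : V) (w : G.Walk u u), w.IsCycle → walkSign σ w = 1) ↔
      ∃ s : Set V, ∀ u v, G.Adj u v →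
        (((u ∈ s ↔ v ∈ s) → σ u v = 1) ∧ (¬(u ∈ s ↔ v ∈ s) → σ u v = -1)) := by
  classical
  constructor
  · intro hcyc
    -- choose a basepoint in each connected component
    set rt : V → V := fun v => (G.connectedComponentMk v).out with hrtdef
    have hrt : ∀ v, G.Reachable (rt v) v := fun v =>
      SimpleGraph.ConnectedComponent.exact ((G.connectedComponentMk v).out_eq)
    set f : V → ℤ := fun v => walkSign σ (hrt v).some with hfdef
    have hfpm : ∀ v, f v = 1 ∨ f v = -1 := fun v => walkSign_pm σ hsign _
    have key : ∀ (a b : V), a = b → ∀ c (p : G.Walk a c) (q : G.Walk b c),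
        walkSign σ p = walkSign σ q := by
      rintro a _ rfl c p q
      exact walkSign_unique σ hsymm hsign hcyc p q
    have hedge : ∀ u v, G.Adj u v → f v = f u * σ u v := by
      intro u v h
      have hrteq : rt u = rt v := by
        simp only [hrtdef]
        rw [SimpleGraph.ConnectedComponent.sound h.reachable]
      have := key (rt u) (rt v) hrteq v
        ((hrt u).some.append (SimpleGraph.Walk.cons h SimpleGraph.Walk.nil)) (hrt v).some
      rw [walkSign_append, walkSign_cons, walkSign_nil] at this
      rw [hfdef]
      simp only [← this]
      ring
    refine ⟨{v | f v = -1}, fun u v h => ?_⟩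
    have huv := hedge u v h
    constructor
    · intro hmem
      simp only [Set.mem_setOf_eq] at hmem
      rcases hfpm u with h1 | h1 <;> rcases hfpm v with h2 | h2 <;>
        rw [h1, h2] at huv <;> simp [h1, h2] at hmem ⊢ <;> omega
    · intro hmem
      simp only [Set.mem_setOf_eq] at hmem
      rcases hfpm u with h1 | h1 <;> rcases hfpm v with h2 | h2 <;>
        rw [h1, h2] at huv <;> simp [h1, h2] at hmem ⊢ <;> omega
  · rintro ⟨s, hs⟩ u w hw
    set g : V → ℤ := fun v => if v ∈ s then -1 else 1 with hgdef
    have hg2 : ∀ v, g v * g v = 1 := by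
      intro v; simp only [hgdef]; split <;> ring
    have hgσ : ∀ a b, G.Adj a b → σ a b = g a * g b := by
      intro a b h
      obtain ⟨h1, h2⟩ := hs a b h
      by_cases ha : a ∈ s <;> by_cases hb : b ∈ s <;>
        simp only [hgdef, if_pos, if_neg, ha, hb, ite_true, ite_false]
      · rw [h1 (by tauto)]; ring
      · rw [h2 (by tauto)]; ring
      · rw [h2 (by tauto)]; ring
      · rw [h1 (by tauto)]; ring
    have tele : ∀ {a b : V} (p : G.Walk a b), walkSign σ p = g a * g b := by
      intro a b p
      induction p with
      | nil => rw [walkSign_nil, hg2]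
      | cons h p ih =>
        rename_i x y z
        rw [walkSign_cons, ih, hgσ _ _ h]
        have := hg2 y
        ring_nf
        rw [show g x * g y ^ 2 * g z = g x * (g y * g y) * g z by ring, this]
        ring
    rw [tele w, hg2]
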